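/- Let a, b, c, d be affinely independent points of EuclideanSpace ℝ (Fin 3). Then the three face angles incident to a vertex satisfy the strict triangle inequality; in particular ∠ d a b < ∠ d a c + ∠ c a b. -/

import Mathlib

open EuclideanGeometry Real

private lemma angle_strict_tri {V : Type*} [NormedAddCommGroup V] [InnerProductSpace ℝ V]
    {u v w : V} (hv : v ≠ 0)
    (h1 : ∀ r : ℝ, u ≠ r • v) (h2 : ∀ r : ℝ, w ≠ r • v)
    (h3 : ∀ s t : ℝ, u ≠ s • v + t • w) :
    InnerProductGeometry.angle u w <
      InnerProductGeometry.angle u v + InnerProductGeometry.angle v w := by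
  have hu : u ≠ 0 := fun h => h1 0 (by simp [h])
  have hw : w ≠ 0 := fun h => h2 0 (by simp [h])
  have hA : (0:ℝ) < ‖u‖ := norm_pos_iff.2 hu
  have hB : (0:ℝ) < ‖v‖ := norm_pos_iff.2 hv
  have hC : (0:ℝ) < ‖w‖ := norm_pos_iff.2 hw
  obtain ⟨u', hu'def⟩ : ∃ u' : V, u' = u - ((inner ℝ u v : ℝ) / ‖v‖ ^ 2) • v := ⟨_, rfl⟩
  obtain ⟨w', hw'def⟩ : ∃ w' : V, w' = w - ((inner ℝ w v : ℝ) / ‖v‖ ^ 2) • v := ⟨_, rfl⟩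
  have hu' : u' ≠ 0 := by
    intro h
    rw [h, eq_comm, sub_eq_zero] at hu'def
    exact h1 _ hu'def
  have hw' : w' ≠ 0 := by
    intro h
    rw [h, eq_comm, sub_eq_zero] at hw'def
    exact h2 _ hw'def
  have hinner : (inner ℝ u' w' : ℝ)
      = inner ℝ u w - (inner ℝ u v : ℝ) * (inner ℝ w v : ℝ) / ‖v‖ ^ 2 := by
    rw [hu'def, hw'def]
    simp only [inner_sub_left, inner_sub_right, real_inner_smul_left, real_inner_smul_right,
      real_inner_self_eq_norm_sq, real_inner_comm v u, real_inner_comm v w]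
    rw [real_inner_comm w u]
    field_simp
    ring
  have hnu' : ‖u'‖ ^ 2 = ‖u‖ ^ 2 - (inner ℝ u v : ℝ) ^ 2 / ‖v‖ ^ 2 := by
    rw [← real_inner_self_eq_norm_sq u', hu'def]
    simp only [inner_sub_left, inner_sub_right, real_inner_smul_left, real_inner_smul_right,
      real_inner_comm v u]
    rw [real_inner_self_eq_norm_sq v, real_inner_self_eq_norm_sq u]
    field_simp
    ring
  have hnw' : ‖w'‖ ^ 2 = ‖w‖ ^ 2 - (inner ℝ w v : ℝ) ^ 2 / ‖v‖ ^ 2 := by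
    rw [← real_inner_self_eq_norm_sq w', hw'def]
    simp only [inner_sub_left, inner_sub_right, real_inner_smul_left, real_inner_smul_right,
      real_inner_comm v w]
    rw [real_inner_self_eq_norm_sq v, real_inner_self_eq_norm_sq w]
    field_simp
    ring
  -- strict Cauchy-Schwarz
  have hCS : -(‖u'‖ * ‖w'‖) < inner ℝ u' w' := by
    have hne : ‖-w'‖ • u' ≠ ‖u'‖ • (-w') := by
      intro h
      rw [norm_neg, smul_neg, eq_comm, neg_eq_iff_eq_neg, ← neg_smul] at h
      have hw'n : (0:ℝ) < ‖w'‖ := norm_pos_iff.2 hw'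
      obtain ⟨r, hr⟩ : ∃ r : ℝ, r = -‖u'‖ / ‖w'‖ := ⟨_, rfl⟩
      have hpar : u' = r • w' := by
        have h2' := congrArg (fun x : V => (-‖w'‖⁻¹) • x) h
        simp only [smul_smul] at h2'
        rw [show (-‖w'‖⁻¹ * -‖w'‖ : ℝ) = 1 by field_simp, one_smul] at h2'
        rw [← h2', hr]
        congr 1
        field_simp
      have h5 : u - ((inner ℝ u v : ℝ) / ‖v‖ ^ 2) • v
          = r • (w - ((inner ℝ w v : ℝ) / ‖v‖ ^ 2) • v) := by
        rw [← hu'def, ← hw'def, hpar]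
      apply h3 ((inner ℝ u v : ℝ) / ‖v‖ ^ 2 - r * ((inner ℝ w v : ℝ) / ‖v‖ ^ 2)) r
      rw [sub_eq_iff_eq_add] at h5
      nth_rewrite 1 [h5]
      module
    have := inner_lt_norm_mul_iff_real.2 hne
    rw [inner_neg_right, norm_neg] at this
    linarith
  have e1 := InnerProductGeometry.cos_angle_mul_norm_mul_norm u v
  have e2 := InnerProductGeometry.cos_angle_mul_norm_mul_norm v w
  have e3 := InnerProductGeometry.cos_angle_mul_norm_mul_norm u w
  rw [real_inner_comm w v] at e2
  have s1 : Real.sin (InnerProductGeometry.angle u v) * (‖u‖ * ‖v‖) = ‖v‖ * ‖u'‖ := by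
    rw [InnerProductGeometry.sin_angle_mul_norm_mul_norm]
    rw [show ‖v‖ * ‖u'‖ = Real.sqrt (‖v‖ ^ 2 * ‖u'‖ ^ 2) by
      rw [Real.sqrt_mul (by positivity), Real.sqrt_sq hB.le, Real.sqrt_sq (norm_nonneg _)]]
    congr 1
    rw [hnu', real_inner_self_eq_norm_sq, real_inner_self_eq_norm_sq]
    field_simp
  have s2 : Real.sin (InnerProductGeometry.angle v w) * (‖v‖ * ‖w‖) = ‖v‖ * ‖w'‖ := by
    rw [InnerProductGeometry.sin_angle_mul_norm_mul_norm]
    rw [show ‖v‖ * ‖w'‖ = Real.sqrt (‖v‖ ^ 2 * ‖w'‖ ^ 2) by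
      rw [Real.sqrt_mul (by positivity), Real.sqrt_sq hB.le, Real.sqrt_sq (norm_nonneg _)]]
    congr 1
    rw [hnw', real_inner_self_eq_norm_sq, real_inner_self_eq_norm_sq,
      real_inner_comm v w]
    field_simp
  have key : Real.cos (InnerProductGeometry.angle u v + InnerProductGeometry.angle v w)
      < Real.cos (InnerProductGeometry.angle u w) := by
    rw [Real.cos_add]
    have hmul : (0:ℝ) < ‖u‖ * ‖v‖ * (‖v‖ * ‖w‖) := by positivity
    rw [← mul_lt_mul_iff_of_pos_right hmul]
    have expand1 : (Real.cos (InnerProductGeometry.angle u v) *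
          Real.cos (InnerProductGeometry.angle v w) -
          Real.sin (InnerProductGeometry.angle u v) *
          Real.sin (InnerProductGeometry.angle v w)) * (‖u‖ * ‖v‖ * (‖v‖ * ‖w‖))
        = (inner ℝ u v : ℝ) * (inner ℝ w v : ℝ) - (‖v‖ * ‖u'‖) * (‖v‖ * ‖w'‖) := by
      rw [← e1, ← e2, ← s1, ← s2]; ring
    have expand2 : Real.cos (InnerProductGeometry.angle u w) * (‖u‖ * ‖v‖ * (‖v‖ * ‖w‖))
        = (inner ℝ u w : ℝ) * ‖v‖ ^ 2 := by
      rw [← e3]; ring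
    rw [expand1, expand2]
    have hRQ : (inner ℝ u w : ℝ) * ‖v‖ ^ 2
        = ‖v‖ ^ 2 * inner ℝ u' w' + (inner ℝ u v : ℝ) * (inner ℝ w v : ℝ) := by
      rw [hinner]; field_simp; ring
    rw [hRQ]
    have hmm := mul_lt_mul_of_pos_left hCS (show (0:ℝ) < ‖v‖ ^ 2 by positivity)
    nlinarith [hmm]
  by_contra hcon
  push_neg at hcon
  have h0 : (0:ℝ) ≤ InnerProductGeometry.angle u v + InnerProductGeometry.angle v w := by
    have := InnerProductGeometry.angle_nonneg u v
    have := InnerProductGeometry.angle_nonneg v w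
    linarith
  have hpi := InnerProductGeometry.angle_le_pi u w
  have := Real.cos_le_cos_of_nonneg_of_le_pi h0 hpi hcon
  linarith

/-- The three face angles incident to a vertex of a nondegenerate tetrahedron
satisfy the strict triangle inequality. -/
theorem vertex_angles_strict_triangle_inequality
    (a b c d : EuclideanSpace ℝ (Fin 3))
    (h : AffineIndependent ℝ ![a, b, c, d]) :
    ∠ d a b < ∠ d a c + ∠ c a b := by
  have haff := affineIndependent_iff.1 h
  have hv : c -ᵥ a ≠ 0 := by
    intro hca
    rw [vsub_eq_sub, sub_eq_zero] at hca
    have h4 := haff Finset.univ ![-1, 0, 1, 0] (by simp [Fin.sum_univ_four])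
      (by simp [Fin.sum_univ_four, hca]) 2 (Finset.mem_univ _)
    change (1:ℝ) = 0 at h4
    norm_num at h4
  have h1 : ∀ r : ℝ, d -ᵥ a ≠ r • (c -ᵥ a) := by
    intro r hr
    rw [vsub_eq_sub, vsub_eq_sub] at hr
    have hd : d = r • (c - a) + a := sub_eq_iff_eq_add.1 hr
    have h4 := haff Finset.univ ![r - 1, 0, -r, 1]
      (by simp [Fin.sum_univ_four]; ring)
      (by simp [Fin.sum_univ_four]; rw [hd]; module) 3 (Finset.mem_univ _)
    change (1:ℝ) = 0 at h4
    norm_num at h4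
  have h2 : ∀ r : ℝ, b -ᵥ a ≠ r • (c -ᵥ a) := by
    intro r hr
    rw [vsub_eq_sub, vsub_eq_sub] at hr
    have hb : b = r • (c - a) + a := sub_eq_iff_eq_add.1 hr
    have h4 := haff Finset.univ ![r - 1, 1, -r, 0]
      (by simp [Fin.sum_univ_four])
      (by simp [Fin.sum_univ_four]; rw [hb]; module) 1 (Finset.mem_univ _)
    norm_num at h4
  have h3 : ∀ s t : ℝ, d -ᵥ a ≠ s • (c -ᵥ a) + t • (b -ᵥ a) := by
    intro s t hst
    rw [vsub_eq_sub, vsub_eq_sub, vsub_eq_sub] at hst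
    have hd : d = s • (c - a) + t • (b - a) + a := by
      rw [← hst]; abel
    have h4 := haff Finset.univ ![s + t - 1, -t, -s, 1]
      (by simp [Fin.sum_univ_four]; ring)
      (by simp [Fin.sum_univ_four]; rw [hd]; module) 3 (Finset.mem_univ _)
    change (1:ℝ) = 0 at h4
    norm_num at h4
  exact angle_strict_tri hv h1 h2 h3
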